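/- Every minimal counterexample to Conjecture C4 is a counterexample to Conjecture C6. Precisely: if D is a digraph admitting no non-zero weight vector w with S_D·w ≤ 𝟎, and every digraph with strictly fewer arcs than D does admit such a non-zero weight vector, then S_D is invertible and every entry of S_D⁻¹ is nonnegative. -/

import Mathlib

open Matrix

/-- A digraph whose underlying graph is simple: a finite vertex set with an
irreflexive arc relation having no pair of opposite arcs. -/
structure SimpleDigraph (V : Type) where
  Adj : V → V → Prop
  loopless : ∀ v, ¬ Adj v v
  no_opposite : ∀ u v, Adj u v → ¬ Adj v u

namespace SimpleDigraph

variable {V : Type}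

/-- `D.DistTwo u v` says that `v` is at out-distance exactly `2` from `u`,
i.e. the shortest directed path from `u` to `v` has length `2`. -/
def DistTwo (D : SimpleDigraph V) (u v : V) : Prop :=
  u ≠ v ∧ ¬ D.Adj u v ∧ ∃ w, D.Adj u w ∧ D.Adj w v

open Classical in
/-- The second-neighborhood matrix of a digraph: the `(i,j)` entry is `1` if
`d(i,j) = 1`, `-1` if `d(i,j) = 2`, and `0` otherwise. -/
noncomputable def sMatrix (D : SimpleDigraph V) : Matrix V V ℝ :=
  Matrix.of fun i j => if D.Adj i j then 1 else if D.DistTwo i j then -1 else 0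

/-- `d⁺(v)`, the number of vertices at out-distance `1` from `v`. -/
noncomputable def outDeg (D : SimpleDigraph V) (v : V) : ℕ :=
  Nat.card {u : V // D.Adj v u}

/-- `d⁺⁺(v)`, the number of vertices at out-distance `2` from `v`. -/
noncomputable def outDeg2 (D : SimpleDigraph V) (v : V) : ℕ :=
  Nat.card {u : V // D.DistTwo v u}

/-- `d⁻(v)`, the number of vertices at in-distance `1` from `v`. -/
noncomputable def inDeg (D : SimpleDigraph V) (v : V) : ℕ :=
  Nat.card {u : V // D.Adj u v}

/-- `d⁻⁻(v)`, the number of vertices at in-distance `2` from `v`. -/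
noncomputable def inDeg2 (D : SimpleDigraph V) (v : V) : ℕ :=
  Nat.card {u : V // D.DistTwo u v}

/-- The number of arcs of a digraph. -/
noncomputable def numArcs (D : SimpleDigraph V) : ℕ :=
  Nat.card {p : V × V // D.Adj p.1 p.2}

end SimpleDigraph

namespace SimpleDigraph

variable {V : Type}

lemma sMatrix_of_adj (D : SimpleDigraph V) {i j : V} (h : D.Adj i j) :
    D.sMatrix i j = 1 := by
  simp only [sMatrix, Matrix.of_apply, if_pos h]

lemma sMatrix_of_not (D : SimpleDigraph V) {i j : V} (h1 : ¬ D.Adj i j)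
    (h2 : ¬ D.DistTwo i j) : D.sMatrix i j = 0 := by
  simp only [sMatrix, Matrix.of_apply, if_neg h1, if_neg h2]

lemma neg_one_le_sMatrix (D : SimpleDigraph V) (i j : V) :
    (-1 : ℝ) ≤ D.sMatrix i j := by
  simp only [sMatrix, Matrix.of_apply]
  split_ifs <;> norm_num

lemma sMatrix_of_distTwo (D : SimpleDigraph V) {i j : V} (h : D.DistTwo i j) :
    D.sMatrix i j = -1 := by
  simp only [sMatrix, Matrix.of_apply, if_neg h.2.1, if_pos h]

end SimpleDigraph

lemma myCardLt {α β : Type} [Finite β] (f : α → β) (hf : Function.Injective f)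
    {b : β} (hb : b ∉ Set.range f) : Nat.card α < Nat.card β := by
  have : Finite α := Finite.of_injective f hf
  have := Fintype.ofFinite α
  have := Fintype.ofFinite β
  rw [Nat.card_eq_fintype_card, Nat.card_eq_fintype_card]
  exact Fintype.card_lt_of_injective_of_notMem f hf hb

/-- A matrix with nonpositive off-diagonal entries such that no nonzero
nonnegative vector `l` has `A *ᵥ l ≤ 0` is monotone. -/
lemma zmatrix_monotone {n : ℕ} (A : Matrix (Fin n) (Fin n) ℝ)
    (hoff : ∀ i j, i ≠ j → A i j ≤ 0)
    (hdag : ∀ l : Fin n → ℝ, (∀ i, 0 ≤ l i) → A *ᵥ l ≤ 0 → l = 0)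
    {x : Fin n → ℝ} (hx : 0 ≤ A *ᵥ x) : ∀ i, 0 ≤ x i := by
  set p : Fin n → ℝ := fun j => max (x j) 0 with hp
  set l : Fin n → ℝ := fun j => max (-x j) 0 with hl
  have hl0 : ∀ j, 0 ≤ l j := fun j => le_max_right _ _
  have hp0 : ∀ j, 0 ≤ p j := fun j => le_max_right _ _
  have hpl : ∀ j, l j = p j - x j := by
    intro j
    simp only [hl, hp]
    rcases le_total (x j) 0 with h | h
    · rw [max_eq_left (by linarith), max_eq_right h]; ring
    · rw [max_eq_right (by linarith), max_eq_left h]; ring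
  have key : A *ᵥ l ≤ 0 := by
    rw [Pi.le_def]
    intro i
    simp only [Pi.zero_apply]
    have hAx : 0 ≤ (A *ᵥ x) i := by simpa using hx i
    by_cases hxi : 0 ≤ x i
    · have hli : l i = 0 := by simp only [hl]; rw [max_eq_right (by linarith)]
      have : (A *ᵥ l) i = ∑ j, A i j * l j := rfl
      rw [this]
      apply Finset.sum_nonpos
      intro j _
      rcases eq_or_ne i j with rfl | hne
      · rw [hli, mul_zero]
      · calc A i j * l j ≤ 0 * l j :=
              mul_le_mul_of_nonneg_right (hoff i j hne) (hl0 j)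
          _ = 0 := zero_mul _
    · have hpi : p i = 0 := by
        simp only [hp]; rw [max_eq_right (by linarith)]
      have h1 : (A *ᵥ l) i = (∑ j, A i j * p j) - (A *ᵥ x) i := by
        show (∑ j, A i j * l j) = _
        rw [show (A *ᵥ x) i = ∑ j, A i j * x j from rfl, ← Finset.sum_sub_distrib]
        apply Finset.sum_congr rfl
        intro j _
        rw [hpl j]; ring
      have h2 : (∑ j, A i j * p j) ≤ 0 := by
        apply Finset.sum_nonpos
        intro j _
        rcases eq_or_ne i j with rfl | hne
        · rw [hpi, mul_zero]
        · calc A i j * p j ≤ 0 * p j :=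
                mul_le_mul_of_nonneg_right (hoff i j hne) (hp0 j)
            _ = 0 := zero_mul _
      rw [h1]; linarith
  have hl_zero := hdag l hl0 key
  intro i
  have : l i = 0 := congrFun hl_zero i
  simp only [hl] at this
  by_contra hneg
  push_neg at hneg
  rw [max_eq_left (by linarith)] at this
  linarith

/-- Every minimal counterexample to Conjecture C4 is a counterexample to
Conjecture C6: if `D` admits no non-zero weight vector `w` with `S_D · w ≤ 𝟎`,
while every digraph with strictly fewer arcs admits one, then `S_D` is invertible
and every entry of `S_D⁻¹` is nonnegative. -/
theorem minimal_counterexample_C4_is_counterexample_C6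
    {n : ℕ} (hn : 0 < n) (D : SimpleDigraph (Fin n))
    (hD : ¬ ∃ w : Fin n → ℝ, (∀ i, 0 ≤ w i) ∧ w ≠ 0 ∧ D.sMatrix *ᵥ w ≤ 0)
    (hmin : ∀ (m : ℕ), 0 < m → ∀ E : SimpleDigraph (Fin m),
      E.numArcs < D.numArcs →
      ∃ w : Fin m → ℝ, (∀ i, 0 ≤ w i) ∧ w ≠ 0 ∧ E.sMatrix *ᵥ w ≤ 0) :
    IsUnit D.sMatrix ∧ ∀ i j, 0 ≤ D.sMatrix⁻¹ i j := by
  classical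
  -- Step 1: every vertex has an out-neighbour.
  have hout : ∀ a : Fin n, ∃ b, D.Adj a b := by
    intro u
    by_contra hsink
    push_neg at hsink
    have hrow : ∀ j, D.sMatrix u j = 0 := fun j =>
      D.sMatrix_of_not (hsink j) (fun h => hsink h.2.2.choose h.2.2.choose_spec.1)
    by_cases hin : ∃ a, D.Adj a u
    · -- u is a sink with positive in-degree: delete the vertex u.
      obtain ⟨a, hau⟩ := hin
      obtain ⟨m, rfl⟩ : ∃ m, n = m + 1 := ⟨n - 1, (Nat.succ_pred_eq_of_pos hn).symm⟩
      have hane : a ≠ u := fun h => D.loopless u (h ▸ hau)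
      have hm : 0 < m := by
        rcases Nat.eq_zero_or_pos m with h0 | h
        · subst h0
          have h1 := a.isLt
          have h2 := u.isLt
          exact absurd (Fin.ext (by omega)) hane
        · exact h
      set emb : Fin m → Fin (m + 1) := u.succAbove with hemb
      have hembinj : Function.Injective emb := Fin.succAbove_right_injective
      set E : SimpleDigraph (Fin m) :=
        ⟨fun i j => D.Adj (emb i) (emb j), fun v h => D.loopless _ h,
          fun i j h h' => D.no_opposite _ _ h h'⟩ with hE
      have harcs : E.numArcs < D.numArcs := by
        refine myCardLt (f := fun p : {p : Fin m × Fin m // E.Adj p.1 p.2} =>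
          (⟨(emb p.1.1, emb p.1.2), p.2⟩ : {p : Fin (m+1) × Fin (m+1) // D.Adj p.1 p.2}))
          ?_ (b := ⟨(a, u), hau⟩) ?_
        · rintro ⟨⟨i₁, j₁⟩, h₁⟩ ⟨⟨i₂, j₂⟩, h₂⟩ hpq
          simp only [Subtype.mk.injEq, Prod.mk.injEq] at hpq
          exact Subtype.ext (Prod.ext (hembinj hpq.1) (hembinj hpq.2))
        · rintro ⟨⟨⟨i, j⟩, h⟩, hh⟩
          simp only [Subtype.mk.injEq, Prod.mk.injEq] at hh
          exact Fin.succAbove_ne u j hh.2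
      have hSE : ∀ i j, E.sMatrix i j = D.sMatrix (emb i) (emb j) := by
        intro i j
        have hadj : E.Adj i j ↔ D.Adj (emb i) (emb j) := Iff.rfl
        have hd2 : E.DistTwo i j ↔ D.DistTwo (emb i) (emb j) := by
          constructor
          · rintro ⟨hne, hnadj, k, h1, h2⟩
            exact ⟨fun h => hne (hembinj h), hnadj, emb k, h1, h2⟩
          · rintro ⟨hne, hnadj, z, h1, h2⟩
            have hz : z ≠ u := fun h => hsink (emb j) (h ▸ h2)
            obtain ⟨k, rfl⟩ := Fin.exists_succAbove_eq hz
            exact ⟨fun h => hne (congrArg emb h), hnadj, k, h1, h2⟩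
        by_cases h1 : D.Adj (emb i) (emb j)
        · rw [D.sMatrix_of_adj h1, E.sMatrix_of_adj (hadj.mpr h1)]
        · by_cases h2 : D.DistTwo (emb i) (emb j)
          · rw [D.sMatrix_of_distTwo h2, E.sMatrix_of_distTwo (hd2.mpr h2)]
          · rw [D.sMatrix_of_not h1 h2,
              E.sMatrix_of_not (fun h => h1 (hadj.mp h)) (fun h => h2 (hd2.mp h))]
      obtain ⟨w', hw'0, hw'ne, hw'le⟩ := hmin m hm E harcs
      set w : Fin (m + 1) → ℝ :=
        fun x => if h : ∃ k, emb k = x then w' h.choose else 0 with hw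
      have hwemb : ∀ k, w (emb k) = w' k := by
        intro k
        have hex : ∃ k', emb k' = emb k := ⟨k, rfl⟩
        simp only [hw, dif_pos hex]
        exact congrArg w' (hembinj hex.choose_spec)
      have hwu : w u = 0 := by
        have : ¬ ∃ k, emb k = u := by
          rintro ⟨k, hk⟩; exact Fin.succAbove_ne u k hk
        simp only [hw, dif_neg this]
      apply hD
      refine ⟨w, ?_, ?_, ?_⟩
      · intro i
        simp only [hw]
        split
        · exact hw'0 _
        · exact le_refl 0
      · obtain ⟨k, hk⟩ : ∃ k, w' k ≠ 0 := by
          by_contra hall; push_neg at hall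
          exact hw'ne (funext hall)
        intro h0
        exact hk (by rw [← hwemb k, h0]; rfl)
      · rw [Pi.le_def]
        intro i
        simp only [Pi.zero_apply]
        rcases eq_or_ne i u with rfl | hiu
        · have : (D.sMatrix *ᵥ w) i = ∑ j, D.sMatrix i j * w j := rfl
          rw [this]
          apply le_of_eq
          apply Finset.sum_eq_zero
          intro j _
          rw [hrow j, zero_mul]
        · obtain ⟨i', rfl⟩ := Fin.exists_succAbove_eq hiu
          have hexp : (D.sMatrix *ᵥ w) (emb i') =
              D.sMatrix (emb i') u * w u +
                ∑ j, D.sMatrix (emb i') (emb j) * w (emb j) := by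
            exact Fin.sum_univ_succAbove (fun x => D.sMatrix (emb i') x * w x) u
          rw [hexp, hwu, mul_zero, zero_add]
          have : ∑ j, D.sMatrix (emb i') (emb j) * w (emb j)
              = (E.sMatrix *ᵥ w') i' := by
            apply Finset.sum_congr rfl
            intro j _
            simp only [hSE, hwemb]
          rw [this]
          simpa using hw'le i'
    · -- u is isolated: the column of u is zero, so `Pi.single u 1` works.
      push_neg at hin
      apply hD
      refine ⟨Pi.single u 1, ?_, ?_, ?_⟩
      · intro i
        rcases eq_or_ne i u with rfl | h
        · simp
        · simp [Pi.single_apply, h]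
      · intro h0
        have := congrFun h0 u
        simp at this
      · rw [Pi.le_def]
        intro i
        simp only [Matrix.mulVec_single_one, mul_one, Pi.zero_apply]
        apply le_of_eq
        exact D.sMatrix_of_not (hin i)
          (fun h => hin h.2.2.choose h.2.2.choose_spec.2)
  -- Step 2: for each vertex a, a weight vector failing (possibly) only at row a.
  have hfam : ∀ a : Fin n, ∃ w : Fin n → ℝ,
      (∀ i, 0 ≤ w i) ∧ w ≠ 0 ∧ ∀ i, i ≠ a → (D.sMatrix *ᵥ w) i ≤ 0 := by
    intro a
    obtain ⟨b, hab⟩ := hout a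
    set E : SimpleDigraph (Fin n) :=
      ⟨fun i j => i ≠ a ∧ D.Adj i j, fun v h => D.loopless v h.2,
        fun i j h h' => D.no_opposite _ _ h.2 h'.2⟩ with hE
    have harcs : E.numArcs < D.numArcs := by
      refine myCardLt (f := fun p : {p : Fin n × Fin n // E.Adj p.1 p.2} =>
        (⟨p.1, p.2.2⟩ : {p : Fin n × Fin n // D.Adj p.1 p.2}))
        ?_ (b := ⟨(a, b), hab⟩) ?_
      · rintro ⟨p, hp⟩ ⟨q, hq⟩ hpq
        simp only [Subtype.mk.injEq] at hpq
        exact Subtype.ext hpq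
      · rintro ⟨⟨⟨i, j⟩, h⟩, hh⟩
        simp only [Subtype.mk.injEq, Prod.mk.injEq] at hh
        exact h.1 hh.1
    obtain ⟨w, hw0, hwne, hwle⟩ := hmin n hn E harcs
    refine ⟨w, hw0, hwne, fun i hia => ?_⟩
    have hle : ∀ j, D.sMatrix i j ≤ E.sMatrix i j := by
      intro j
      by_cases h1 : D.Adj i j
      · rw [D.sMatrix_of_adj h1, E.sMatrix_of_adj (show E.Adj i j from ⟨hia, h1⟩)]
      · by_cases h2 : D.DistTwo i j
        · rw [D.sMatrix_of_distTwo h2]; exact E.neg_one_le_sMatrix i j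
        · rw [D.sMatrix_of_not h1 h2]
          apply le_of_eq
          symm
          refine E.sMatrix_of_not (fun h => h1 h.2) ?_
          rintro ⟨hne, hnadj, k, hik, hkj⟩
          exact h2 ⟨hne, h1, k, hik.2, hkj.2⟩
    calc (D.sMatrix *ᵥ w) i ≤ (E.sMatrix *ᵥ w) i := by
          show ∑ j, D.sMatrix i j * w j ≤ ∑ j, E.sMatrix i j * w j
          apply Finset.sum_le_sum
          intro j _
          exact mul_le_mul_of_nonneg_right (hle j) (hw0 j)
      _ ≤ 0 := by simpa using hwle i
  -- Step 3: assemble the matrices and conclude.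
  choose w hw0 hwne hwrow using hfam
  set W : Matrix (Fin n) (Fin n) ℝ := Matrix.of fun i a => w a i with hW
  set A : Matrix (Fin n) (Fin n) ℝ := D.sMatrix * W with hA
  have hAapp : ∀ i a, A i a = (D.sMatrix *ᵥ w a) i := by
    intro i a
    simp only [hA, Matrix.mul_apply, Matrix.mulVec, dotProduct, hW,
      Matrix.of_apply]
  have hoff : ∀ i a, i ≠ a → A i a ≤ 0 := fun i a h =>
    (hAapp i a) ▸ hwrow a i h
  have hdag : ∀ l : Fin n → ℝ, (∀ i, 0 ≤ l i) → A *ᵥ l ≤ 0 → l = 0 := by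
    intro l hl hAl
    by_contra hlne
    apply hD
    refine ⟨W *ᵥ l, ?_, ?_, ?_⟩
    · intro i
      show 0 ≤ ∑ a, W i a * l a
      exact Finset.sum_nonneg fun a _ => mul_nonneg (hw0 a i) (hl a)
    · obtain ⟨a, ha⟩ : ∃ a, l a ≠ 0 := by
        by_contra hall; push_neg at hall
        exact hlne (funext hall)
      have hla : 0 < l a := (hl a).lt_of_ne (Ne.symm ha)
      obtain ⟨i, hi⟩ : ∃ i, w a i ≠ 0 := by
        by_contra hall; push_neg at hall
        exact hwne a (funext hall)
      have hwi : 0 < w a i := (hw0 a i).lt_of_ne (Ne.symm hi)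
      intro h0
      have h1 : (W *ᵥ l) i = 0 := congrFun h0 i
      have hge : W i a * l a ≤ ∑ b, W i b * l b :=
        Finset.single_le_sum (f := fun b => W i b * l b)
          (fun b _ => mul_nonneg (hw0 b i) (hl b)) (Finset.mem_univ a)
      have h1' : (W *ᵥ l) i = ∑ b, W i b * l b := rfl
      have hWa : W i a = w a i := rfl
      nlinarith
    · rw [Matrix.mulVec_mulVec, ← hA]
      exact hAl
  have hmono : ∀ x : Fin n → ℝ, 0 ≤ A *ᵥ x → ∀ i, 0 ≤ x i :=
    fun x hx => zmatrix_monotone A hoff hdag hx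
  -- A has a nonnegative right inverse
  have hsurj : Function.Surjective (Matrix.toLin' A) := by
    rw [← LinearMap.injective_iff_surjective]
    intro x y hxy
    rw [Matrix.toLin'_apply, Matrix.toLin'_apply] at hxy
    have h1 : A *ᵥ (x - y) = 0 := by
      rw [Matrix.mulVec_sub, hxy, sub_self]
    have h2 : A *ᵥ (y - x) = 0 := by
      rw [Matrix.mulVec_sub, hxy, sub_self]
    have p1 := hmono (x - y) (by rw [h1])
    have p2 := hmono (y - x) (by rw [h2])
    funext i
    have := p1 i
    have := p2 i
    simp only [Pi.sub_apply] at *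
    linarith
  have hX : ∀ j : Fin n, ∃ xc : Fin n → ℝ,
      A *ᵥ xc = Pi.single j 1 ∧ ∀ i, 0 ≤ xc i := by
    intro j
    obtain ⟨xc, hxc⟩ := hsurj (Pi.single j 1)
    rw [Matrix.toLin'_apply] at hxc
    refine ⟨xc, hxc, hmono xc ?_⟩
    rw [hxc]
    intro i
    rcases eq_or_ne i j with rfl | h
    · simp
    · simp [Pi.single_apply, h]
  choose xc hxc hxc0 using hX
  set X : Matrix (Fin n) (Fin n) ℝ := Matrix.of fun i j => xc j i with hXdef
  have hAX : A * X = 1 := by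
    ext i j
    have : (A * X) i j = (A *ᵥ xc j) i := by
      simp only [Matrix.mul_apply, Matrix.mulVec, dotProduct, hXdef,
        Matrix.of_apply]
    rw [this, hxc j]
    simp [Pi.single_apply, Matrix.one_apply, eq_comm]
  set Y : Matrix (Fin n) (Fin n) ℝ := W * X with hY
  have hSY : D.sMatrix * Y = 1 := by
    rw [hY, ← Matrix.mul_assoc, ← hA, hAX]
  refine ⟨(Matrix.isUnit_iff_isUnit_det _).mpr (Matrix.isUnit_det_of_right_inverse hSY), ?_⟩
  intro i j
  rw [Matrix.inv_eq_right_inv hSY]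
  simp only [hY, Matrix.mul_apply]
  exact Finset.sum_nonneg fun k _ => mul_nonneg (hw0 k i) (hxc0 j k)
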